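/- Suppose additionally that the kernel k is aperiodic (A3), that g(t) ≥ 0 for all t ∈ ℕ with ∑_{t=0}^∞ g(t) < ∞, that b satisfies the renewal equation b(t) = ∑_{s=1}^{t} k(s) b(t−s) + g(t) for all t ∈ ℕ, and that ℛ₀ := ∑_{t=1}^∞ k(t) < 1. Then b is summable with ∑_{t=0}^∞ b(t) = (∑_{t=0}^∞ g(t)) / (1 − ℛ₀), and b(t) → 0 as t → ∞. (Feller's Renewal Theorem, part (i).) -/

import Mathlib

open Filter Topology

/-- Feller's Renewal Theorem, part (i): subcritical case `ℛ₀ < 1`. -/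
theorem feller_renewal_subcritical
    (k g b : ℕ → ℝ)
    -- kernel assumptions
    (hk0 : k 0 = 0)
    (hA1 : ∀ t, 0 ≤ k t) (hA1' : ∃ t, 0 < k t)
    (hA2 : Summable k)
    -- (A3) aperiodicity
    (hA3 : ¬ ∃ p : ℕ, 1 < p ∧ ∀ s : ℕ, ¬ p ∣ s → k s = 0)
    -- forcing assumptions
    (hg : ∀ t, 0 ≤ g t) (hgsum : Summable g)
    -- the renewal equation
    (hb : ∀ t : ℕ, b t = (∑ s ∈ Finset.Icc 1 t, k s * b (t - s)) + g t)
    -- subcriticality: ℛ₀ = ∑_{t=1}^∞ k t < 1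
    (hR0 : (∑' t : ℕ, k t) < 1) :
    Summable b ∧ (∑' t : ℕ, b t) = (∑' t : ℕ, g t) / (1 - ∑' t : ℕ, k t) ∧
      Tendsto b atTop (𝓝 0) := by
  set R : ℝ := ∑' t : ℕ, k t with hR
  set G : ℝ := ∑' t : ℕ, g t with hG
  have hRnn : 0 ≤ R := tsum_nonneg hA1
  have hGnn : 0 ≤ G := tsum_nonneg hg
  have h1R : 0 < 1 - R := by linarith
  -- b is nonnegative
  have hbnn : ∀ t, 0 ≤ b t := by
    intro t
    induction t using Nat.strong_induction_on with
    | _ t ih =>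
      rw [hb t]
      have h1 : 0 ≤ ∑ s ∈ Finset.Icc 1 t, k s * b (t - s) := by
        refine Finset.sum_nonneg fun s hs => mul_nonneg (hA1 s) (ih (t - s) ?_)
        simp only [Finset.mem_Icc] at hs; omega
      linarith [hg t]
  -- partial sums of g bounded by G
  have hgB : ∀ N, ∑ t ∈ Finset.range N, g t ≤ G := fun N =>
    Summable.sum_le_tsum _ (fun i _ => hg i) hgsum
  -- partial sums of b bounded
  have hBbd : ∀ N, ∑ t ∈ Finset.range N, b t ≤ G / (1 - R) := by
    intro N
    set B : ℝ := ∑ t ∈ Finset.range N, b t with hBdef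
    have hBnn : 0 ≤ B := Finset.sum_nonneg fun i _ => hbnn i
    have hsplit : B = (∑ t ∈ Finset.range N, ∑ s ∈ Finset.Icc 1 t, k s * b (t - s))
        + ∑ t ∈ Finset.range N, g t := by
      rw [hBdef, ← Finset.sum_add_distrib]
      exact Finset.sum_congr rfl fun t _ => hb t
    have hswap : (∑ t ∈ Finset.range N, ∑ s ∈ Finset.Icc 1 t, k s * b (t - s))
        = ∑ s ∈ Finset.Icc 1 N, ∑ t ∈ Finset.Ico s N, k s * b (t - s) := by
      refine Finset.sum_comm' ?_
      intro t s
      simp only [Finset.mem_range, Finset.mem_Icc, Finset.mem_Ico]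
      omega
    have hinner : ∀ s ∈ Finset.Icc 1 N, ∑ t ∈ Finset.Ico s N, k s * b (t - s) ≤ k s * B := by
      intro s hs
      rw [← Finset.mul_sum]
      refine mul_le_mul_of_nonneg_left ?_ (hA1 s)
      have : ∑ t ∈ Finset.Ico s N, b (t - s) = ∑ i ∈ Finset.range (N - s), b i := by
        rw [Finset.sum_Ico_eq_sum_range]
        exact Finset.sum_congr rfl fun i _ => by congr 1; omega
      rw [this]
      refine Finset.sum_le_sum_of_subset_of_nonneg ?_ (fun i _ _ => hbnn i)
      exact Finset.range_subset_range.mpr (by omega)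
    have hK : ∑ s ∈ Finset.Icc 1 N, k s ≤ R := Summable.sum_le_tsum _ (fun i _ => hA1 i) hA2
    have hmain : B ≤ R * B + G := by
      calc B = _ + _ := hsplit
        _ ≤ (∑ s ∈ Finset.Icc 1 N, k s * B) + G := by
            rw [hswap]
            exact add_le_add (Finset.sum_le_sum hinner) (hgB N)
        _ = (∑ s ∈ Finset.Icc 1 N, k s) * B + G := by rw [Finset.sum_mul]
        _ ≤ R * B + G := by
            have := mul_le_mul_of_nonneg_right hK hBnn
            linarith
    rw [le_div_iff₀ h1R]
    nlinarith
  have hbsum : Summable b := summable_of_sum_range_le hbnn hBbd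
  refine ⟨hbsum, ?_, hbsum.tendsto_atTop_zero⟩
  -- the tsum identity via Cauchy products
  have hkn : Summable fun i => ‖k i‖ := summable_norm_iff.mpr hA2
  have hbn : Summable fun i => ‖b i‖ := summable_norm_iff.mpr hbsum
  have hconv : ∀ t, b t = (∑ ij ∈ Finset.HasAntidiagonal.antidiagonal t, k ij.1 * b ij.2) + g t := by
    intro t
    rw [Finset.Nat.sum_antidiagonal_eq_sum_range_succ_mk, hb t]
    congr 1
    rw [Finset.range_eq_Ico, Finset.sum_eq_sum_Ico_succ_bot (Nat.succ_pos t), hk0,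
      Nat.succ_eq_add_one, Finset.Ico_add_one_right_eq_Icc]
    simp
  have hconvsum : Summable fun n => ∑ ij ∈ Finset.HasAntidiagonal.antidiagonal n, k ij.1 * b ij.2 :=
    summable_norm_iff.mp (summable_norm_sum_mul_antidiagonal_of_summable_norm hkn hbn)
  have hprod : R * (∑' t, b t) = ∑' n, ∑ ij ∈ Finset.HasAntidiagonal.antidiagonal n, k ij.1 * b ij.2 :=
    tsum_mul_tsum_eq_tsum_sum_antidiagonal_of_summable_norm hkn hbn
  have htsum : (∑' t, b t) = R * (∑' t, b t) + G := by
    calc (∑' t, b t)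
        = ∑' t, ((∑ ij ∈ Finset.HasAntidiagonal.antidiagonal t, k ij.1 * b ij.2) + g t) := tsum_congr hconv
      _ = (∑' n, ∑ ij ∈ Finset.HasAntidiagonal.antidiagonal n, k ij.1 * b ij.2) + G := Summable.tsum_add hconvsum hgsum
      _ = R * (∑' t, b t) + G := by rw [hprod]
  have h1R' : (1 - R) ≠ 0 := ne_of_gt h1R
  field_simp
  linarith
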